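/- For every non-negative integer n and real k with 0 < k < 1: ₂F₁(-n, 1/2; 1; 1/(1-k²)) = i^n (k²/(1-k²))^{n/2} P_n(-i(1-2k²)/(2k√(1-k²))). -/

import Mathlib

open Finset Complex

noncomputable def poch (a : ℝ) (k : ℕ) : ℝ := ∏ i ∈ Finset.range k, (a + i)

/-- Terminating hypergeometric polynomial ₂F₁(-n, 1/2; 1; x). -/
noncomputable def termF (n : ℕ) (x : ℝ) : ℝ :=
  ∑ i ∈ Finset.range (n + 1),
    poch (-(n : ℝ)) i * poch (1 / 2) i / ((Nat.factorial i) * (Nat.factorial i)) * x ^ i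

/-- Legendre polynomial of degree `n`, as a function on `ℂ`. -/
noncomputable def legendreP (n : ℕ) (z : ℂ) : ℂ :=
  (2 : ℂ) ^ (-(n : ℤ)) * ∑ k ∈ Finset.range (n / 2 + 1),
    (-1 : ℂ) ^ k * (n.choose k) * ((2 * n - 2 * k).choose n) * z ^ (n - 2 * k)


-- ℤ-cast of `Nat.choose_succ_right_eq`, unconditional
lemma zK4 (n k : ℕ) : ((k:ℤ)+1) * (n.choose (k+1)) = ((n:ℤ) - k) * (n.choose k) := by
  rcases le_or_gt k n with h | h
  · have := Nat.choose_succ_right_eq n k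
    zify [h] at this
    linarith
  · rw [Nat.choose_eq_zero_of_lt (by omega), Nat.choose_eq_zero_of_lt h]
    simp

-- n * C(n-1,j) = (n-j) * C(n,j) over ℤ
lemma zK1 (n j : ℕ) (hn : 1 ≤ n) : (n:ℤ) * ((n-1).choose j) = ((n:ℤ) - j) * (n.choose j) := by
  rcases le_or_gt j (n-1) with h | h
  · have := Nat.choose_mul_succ_eq (n-1) j
    have hn1 : n - 1 + 1 = n := by omega
    rw [hn1] at this
    have hj : j ≤ n := by omega
    zify [hj] at this
    linarith
  · rw [Nat.choose_eq_zero_of_lt (by omega)]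
    rcases le_or_gt j n with h2 | h2
    · have : j = n := by omega
      subst this
      simp
    · rw [Nat.choose_eq_zero_of_lt h2]
      simp

-- central binomial step, ℕ
lemma centralN (i : ℕ) : (i+1) * ((2*i+2).choose (i+1)) = 2*(2*i+1) * ((2*i).choose i) := by
  have := Nat.succ_mul_centralBinom_succ i
  unfold Nat.centralBinom at this
  rw [show 2*(i+1) = 2*i+2 from by omega] at this
  exact this

lemma centralZ (i : ℕ) : ((i:ℤ)+1) * ((2*i+2).choose (i+1)) = 2*(2*(i:ℤ)+1) * ((2*i).choose i) := by
  exact_mod_cast centralN i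

lemma centralR (i : ℕ) : ((i:ℝ)+1) * ((2*i+2).choose (i+1)) = 2*(2*(i:ℝ)+1) * ((2*i).choose i) := by
  exact_mod_cast centralN i

-- coefficient identity for the hypergeometric recurrence
lemma ZID_A (n i : ℕ) (hn : 1 ≤ n) :
    ((n:ℤ)+1) * ((n+1).choose (i+1)) * ((2*i+2).choose (i+1))
      + (n:ℤ) * ((n-1).choose (i+1)) * ((2*i+2).choose (i+1))
      + 4*(n:ℤ) * ((n-1).choose i) * ((2*i).choose i)
    = (2*(n:ℤ)+1) * (n.choose (i+1)) * ((2*i+2).choose (i+1))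
      + 2*(2*(n:ℤ)+1) * (n.choose i) * ((2*i).choose i) := by
  have h1 : ((n+1).choose (i+1) : ℤ) = (n.choose i) + (n.choose (i+1)) := by
    exact_mod_cast Nat.choose_succ_succ n i
  have h2 := zK1 n (i+1) hn
  have h3 := zK1 n i hn
  have h4 := zK4 n i
  have h5 := centralZ i
  push_cast at h2 ⊢
  linear_combination ((n:ℤ)+1) * ((2*i+2).choose (i+1) : ℤ) * h1
    + ((2*i+2).choose (i+1) : ℤ) * h2 + 4 * ((2*i).choose i : ℤ) * h3
    - ((2*i+2).choose (i+1) : ℤ) * h4 + ((n.choose i : ℤ)) * h5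

lemma ZID_B_main (j m : ℕ) :
    ((2*j+m+3 : ℝ)) * ((2*j+m+3).choose (j+1)) * ((2*j+2*m+4).choose (2*j+m+3))
    = 2*(2*(2*j+m+2:ℝ)+1) * ((2*j+m+2).choose (j+1)) * ((2*j+2*m+2).choose (2*j+m+2))
      + 4*(2*j+m+2:ℝ) * ((2*j+m+1).choose j) * ((2*j+2*m+2).choose (2*j+m+1)) := by
  rw [Nat.cast_choose ℝ (show j+1 ≤ 2*j+m+3 by omega),
      Nat.cast_choose ℝ (show 2*j+m+3 ≤ 2*j+2*m+4 by omega),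
      Nat.cast_choose ℝ (show j+1 ≤ 2*j+m+2 by omega),
      Nat.cast_choose ℝ (show 2*j+m+2 ≤ 2*j+2*m+2 by omega),
      Nat.cast_choose ℝ (show j ≤ 2*j+m+1 by omega),
      Nat.cast_choose ℝ (show 2*j+m+1 ≤ 2*j+2*m+2 by omega)]
  rw [show 2*j+m+3 - (j+1) = j+m+2 from by omega,
      show 2*j+2*m+4 - (2*j+m+3) = m+1 from by omega,
      show 2*j+m+2 - (j+1) = j+m+1 from by omega,
      show 2*j+2*m+2 - (2*j+m+2) = m from by omega,
      show 2*j+m+1 - j = j+m+1 from by omega,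
      show 2*j+2*m+2 - (2*j+m+1) = m+1 from by omega]
  have f1 : (Nat.factorial (2*j+2*m+4) : ℝ)
      = (2*j+2*m+4)*(2*j+2*m+3)*(Nat.factorial (2*j+2*m+2) : ℝ) := by
    rw [show 2*j+2*m+4 = (2*j+2*m+2)+1+1 from by omega]
    push_cast [Nat.factorial_succ]
    ring
  have f2 : (Nat.factorial (2*j+m+3) : ℝ) = (2*j+m+3)*(2*j+m+2)*(Nat.factorial (2*j+m+1) : ℝ) := by
    rw [show 2*j+m+3 = (2*j+m+1)+1+1 from by omega]
    push_cast [Nat.factorial_succ]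
    ring
  have f3 : (Nat.factorial (2*j+m+2) : ℝ) = (2*j+m+2)*(Nat.factorial (2*j+m+1) : ℝ) := by
    rw [show 2*j+m+2 = (2*j+m+1)+1 from by omega]
    push_cast [Nat.factorial_succ]
    ring
  have f4 : (Nat.factorial (j+m+2) : ℝ) = (j+m+2)*(Nat.factorial (j+m+1) : ℝ) := by
    rw [show j+m+2 = (j+m+1)+1 from by omega]
    push_cast [Nat.factorial_succ]
    ring
  have f5 : (Nat.factorial (j+1) : ℝ) = (j+1)*(Nat.factorial j : ℝ) := by
    push_cast [Nat.factorial_succ]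
    ring
  have f6 : (Nat.factorial (m+1) : ℝ) = (m+1)*(Nat.factorial m : ℝ) := by
    push_cast [Nat.factorial_succ]
    ring
  rw [f1, f2, f3, f4, f5, f6]
  have h1 : (Nat.factorial (2*j+2*m+2) : ℝ) ≠ 0 := by positivity
  have h2 : (Nat.factorial (2*j+m+1) : ℝ) ≠ 0 := by positivity
  have h3 : (Nat.factorial (j+m+1) : ℝ) ≠ 0 := by positivity
  have h4 : (Nat.factorial j : ℝ) ≠ 0 := by positivity
  have h5 : (Nat.factorial m : ℝ) ≠ 0 := by positivity
  field_simp
  ring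

lemma ZID_B (n j : ℕ) (hn : 1 ≤ n) :
    ((n:ℝ)+1) * ((n+1).choose (j+1)) * ((2*n-2*j).choose (n+1))
    = 2*(2*(n:ℝ)+1) * (n.choose (j+1)) * ((2*n-2*j-2).choose n)
      + 4*(n:ℝ) * ((n-1).choose j) * ((2*n-2*j-2).choose (n-1)) := by
  rcases lt_trichotomy (2*j+1) n with h | h | h
  · -- case A : 2j+2 ≤ n
    obtain ⟨m, rfl⟩ : ∃ m, n = 2*j+m+2 := ⟨n-2*j-2, by omega⟩
    have := ZID_B_main j m
    rw [show 2*(2*j+m+2)-2*j-2 = 2*j+2*m+2 from by omega,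
        show 2*(2*j+m+2)-2*j = 2*j+2*m+4 from by omega,
        show (2*j+m+2)+1 = 2*j+m+3 from by omega,
        show (2*j+m+2)-1 = 2*j+m+1 from by omega]
    push_cast at this ⊢
    linarith
  · -- case B : n = 2j+1
    subst h
    rw [show 2*(2*j+1)-2*j-2 = 2*j from by omega,
        show 2*(2*j+1)-2*j = (2*j+1)+1 from by omega,
        Nat.choose_self,
        Nat.choose_eq_zero_of_lt (show 2*j < 2*j+1 from by omega),
        show 2*j+1-1 = 2*j from by omega, Nat.choose_self]
    have := centralR j
    rw [show 2*j+2 = (2*j+1)+1 from by omega] at this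
    push_cast at this ⊢
    linarith
  · -- case C : n ≤ 2j
    have e1 : ((2*n-2*j).choose (n+1)) = 0 := Nat.choose_eq_zero_of_lt (by omega)
    have e2 : ((2*n-2*j-2).choose n) = 0 := Nat.choose_eq_zero_of_lt (by omega)
    rcases eq_or_lt_of_le hn with h1 | h1
    · have e3 : ((n-1).choose j) = 0 := by
        rw [← h1]
        exact Nat.choose_eq_zero_of_lt (by omega)
      rw [e1, e2, e3]
      simp
    · have e3 : ((2*n-2*j-2).choose (n-1)) = 0 := Nat.choose_eq_zero_of_lt (by omega)
      rw [e1, e2, e3]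
      simp

noncomputable def phiA (m i : ℕ) : ℝ := (-1)^i * (m.choose i) * ((2*i).choose i)

noncomputable def Ffun (n : ℕ) (q : ℝ) : ℝ := ∑ i ∈ Finset.range (n+1), phiA n i * q^i

noncomputable def psiB (m j : ℕ) : ℝ := (m.choose j : ℝ) * ((2*m-2*j).choose m)

noncomputable def Bfun (n : ℕ) (t : ℝ) : ℝ :=
  ∑ j ∈ Finset.range (n+1), psiB n j * t^(n-2*j) * (1-t^2)^j

lemma phiA_zero_of_gt {m i : ℕ} (h : m < i) : phiA m i = 0 := by
  simp [phiA, Nat.choose_eq_zero_of_lt h]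

lemma Ffun_rec (n : ℕ) (hn : 1 ≤ n) (q : ℝ) :
    ((n:ℝ)+1) * Ffun (n+1) q
      = (2*(n:ℝ)+1)*(1-2*q)*Ffun n q + (n:ℝ)*(4*q-1)*Ffun (n-1) q := by
  -- extended sums
  have hFn : Ffun n q = ∑ i ∈ Finset.range (n+2), phiA n i * q^i := by
    rw [Finset.sum_range_succ, phiA_zero_of_gt (by omega)]
    simp [Ffun]
  have hFn1 : Ffun (n-1) q = ∑ i ∈ Finset.range (n+2), phiA (n-1) i * q^i := by
    rw [Finset.sum_range_succ, Finset.sum_range_succ,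
        phiA_zero_of_gt (show n-1 < n+1 from by omega),
        phiA_zero_of_gt (show n-1 < n from by omega)]
    rw [show n = (n-1)+1 from by omega]
    simp [Ffun]
  rw [hFn, hFn1, Ffun]
  have key : ∑ i ∈ Finset.range (n+2),
      ((((n:ℝ)+1) * phiA (n+1) i - (2*(n:ℝ)+1) * phiA n i + (n:ℝ) * phiA (n-1) i) * q^i
        + (2*(2*(n:ℝ)+1)*phiA n i - 4*(n:ℝ)*phiA (n-1) i) * q^(i+1)) = 0 := by
    rw [Finset.sum_add_distrib,
        Finset.sum_range_succ' (fun i => (((n:ℝ)+1) * phiA (n+1) i - (2*(n:ℝ)+1) * phiA n i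
          + (n:ℝ) * phiA (n-1) i) * q^i) (n+1),
        Finset.sum_range_succ (fun i => (2*(2*(n:ℝ)+1)*phiA n i - 4*(n:ℝ)*phiA (n-1) i) * q^(i+1)) (n+1)]
    have hc0 : (((n:ℝ)+1) * phiA (n+1) 0 - (2*(n:ℝ)+1) * phiA n 0 + (n:ℝ) * phiA (n-1) 0) * q^0 = 0 := by
      simp [phiA]
      ring
    have hdn : (2*(2*(n:ℝ)+1)*phiA n (n+1) - 4*(n:ℝ)*phiA (n-1) (n+1)) * q^((n+1)+1) = 0 := by
      rw [phiA_zero_of_gt (by omega), phiA_zero_of_gt (by omega)]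
      ring
    rw [hc0, hdn, add_zero, add_zero, ← Finset.sum_add_distrib]
    apply Finset.sum_eq_zero
    intro i _
    have hz := ZID_A n i hn
    have hzr : ((n:ℝ)+1) * ((n+1).choose (i+1)) * ((2*i+2).choose (i+1))
      + (n:ℝ) * ((n-1).choose (i+1)) * ((2*i+2).choose (i+1))
      + 4*(n:ℝ) * ((n-1).choose i) * ((2*i).choose i)
      = (2*(n:ℝ)+1) * (n.choose (i+1)) * ((2*i+2).choose (i+1))
      + 2*(2*(n:ℝ)+1) * (n.choose i) * ((2*i).choose i) := by exact_mod_cast hz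
    simp only [phiA]
    rw [show 2*(i+1) = 2*i+2 from by omega]
    linear_combination (-((-1:ℝ))^i) * q^(i+1) * hzr
  calc ((n:ℝ)+1) * ∑ i ∈ Finset.range (n+1+1), phiA (n+1) i * q^i
      = (2*(n:ℝ)+1)*(1-2*q)*(∑ i ∈ Finset.range (n+2), phiA n i * q^i)
        + (n:ℝ)*(4*q-1)*(∑ i ∈ Finset.range (n+2), phiA (n-1) i * q^i)
        + ∑ i ∈ Finset.range (n+2),
          ((((n:ℝ)+1) * phiA (n+1) i - (2*(n:ℝ)+1) * phiA n i + (n:ℝ) * phiA (n-1) i) * q^i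
            + (2*(2*(n:ℝ)+1)*phiA n i - 4*(n:ℝ)*phiA (n-1) i) * q^(i+1)) := by
        rw [Finset.mul_sum, Finset.mul_sum, Finset.mul_sum, ← Finset.sum_add_distrib,
            ← Finset.sum_add_distrib]
        exact Finset.sum_congr rfl (fun i _ => by ring)
    _ = _ := by rw [key]; ring

lemma B_rec (n : ℕ) (hn : 1 ≤ n) (t : ℝ) :
    ((n:ℝ)+1) * Bfun (n+1) t
      = 2*(2*(n:ℝ)+1)*t*Bfun n t + 4*(n:ℝ)*(1-t^2)*Bfun (n-1) t := by
  have hL : ((n:ℝ)+1) * Bfun (n+1) t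
      = ((n:ℝ)+1) * psiB (n+1) 0 * t^(n+1) * (1-t^2)^0
        + ∑ j ∈ Finset.range n,
            ((n:ℝ)+1) * psiB (n+1) (j+1) * t^((n+1)-2*(j+1)) * (1-t^2)^(j+1) := by
    rw [Bfun, Finset.mul_sum,
        Finset.sum_range_succ' (fun j => ((n:ℝ)+1) * (psiB (n+1) j * t^((n+1)-2*j) * (1-t^2)^j)) (n+1),
        Finset.sum_range_succ]
    have hz : psiB (n+1) (n+1) = 0 := by
      rw [psiB, show 2*(n+1)-2*(n+1) = 0 from by omega,
          Nat.choose_eq_zero_of_lt (show 0 < n+1 from by omega)]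
      simp
    rw [hz, show n+1-2*0 = n+1 from by omega]
    rw [Finset.sum_congr rfl (fun j _ => by ring : ∀ j ∈ Finset.range n, ((n:ℝ)+1) * (psiB (n+1) (j+1) * t^((n+1)-2*(j+1)) * (1-t^2)^(j+1)) = ((n:ℝ)+1) * psiB (n+1) (j+1) * t^((n+1)-2*(j+1)) * (1-t^2)^(j+1))]
    ring
  have h2 : 2*(2*(n:ℝ)+1)*t*Bfun n t
      = ∑ j ∈ Finset.range (n+1), 2*(2*(n:ℝ)+1) * psiB n j * t^((n+1)-2*j) * (1-t^2)^j := by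
    rw [Bfun, Finset.mul_sum]
    refine Finset.sum_congr rfl (fun j _ => ?_)
    rcases le_or_gt (2*j) n with h | h
    · rw [show (n+1)-2*j = (n-2*j)+1 from by omega]
      ring
    · have hz : ((2*n-2*j).choose n) = 0 := Nat.choose_eq_zero_of_lt (by omega)
      simp [psiB, hz]
  have h3 : 4*(n:ℝ)*(1-t^2)*Bfun (n-1) t
      = ∑ j ∈ Finset.range n, 4*(n:ℝ) * psiB (n-1) j * t^((n+1)-2*(j+1)) * (1-t^2)^(j+1) := by
    rw [Bfun, show (n-1)+1 = n from by omega, Finset.mul_sum]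
    refine Finset.sum_congr rfl (fun j _ => ?_)
    rw [show (n+1)-2*(j+1) = (n-1)-2*j from by omega]
    ring
  rw [hL, h2, h3,
      Finset.sum_range_succ' (fun j => 2*(2*(n:ℝ)+1) * psiB n j * t^((n+1)-2*j) * (1-t^2)^j) n,
      show (n+1)-2*0 = n+1 from by omega]
  have hhead : ((n:ℝ)+1) * psiB (n+1) 0 * t^(n+1) * (1-t^2)^0
      = 2*(2*(n:ℝ)+1) * psiB n 0 * t^(n+1) * (1-t^2)^0 := by
    simp only [psiB, Nat.choose_zero_right, Nat.cast_one, Nat.mul_zero, Nat.sub_zero, pow_zero]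
    rw [show 2*(n+1) = 2*n+2 from by omega]
    linear_combination (t^(n+1)) * centralR n
  have hterm : ∀ j ∈ Finset.range n,
      ((n:ℝ)+1) * psiB (n+1) (j+1) * t^((n+1)-2*(j+1)) * (1-t^2)^(j+1)
      = 2*(2*(n:ℝ)+1) * psiB n (j+1) * t^((n+1)-2*(j+1)) * (1-t^2)^(j+1)
        + 4*(n:ℝ) * psiB (n-1) j * t^((n+1)-2*(j+1)) * (1-t^2)^(j+1) := by
    intro j _
    simp only [psiB]
    rw [show 2*(n+1)-2*(j+1) = 2*n-2*j from by omega,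
        show 2*n-2*(j+1) = 2*n-2*j-2 from by omega,
        show 2*(n-1)-2*j = 2*n-2*j-2 from by omega]
    linear_combination (t^((n+1)-2*(j+1)) * (1-t^2)^(j+1)) * ZID_B n j hn
  rw [hhead, Finset.sum_congr rfl hterm, Finset.sum_add_distrib]
  ring

lemma poch_neg (n : ℕ) : ∀ i, i ≤ n → poch (-(n:ℝ)) i = (-1)^i * (Nat.factorial i) * (n.choose i) := by
  intro i
  induction i with
  | zero => intro _; simp [poch]
  | succ i ih =>
    intro hi
    rw [poch, Finset.prod_range_succ, ← poch, ih (by omega)]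
    have hc := Nat.choose_succ_right_eq n i
    have hcc : ((n.choose (i+1)) : ℝ) * (i+1) = (n.choose i : ℝ) * ((n:ℝ) - i) := by
      have h1 : (i:ℝ) ≤ n := by exact_mod_cast (by omega : i ≤ n)
      have := hc
      zify [show i ≤ n from by omega] at this
      exact_mod_cast this
    rw [Nat.factorial_succ]
    push_cast
    linear_combination ((-1:ℝ))^i * (Nat.factorial i : ℝ) * hcc

lemma poch_half : ∀ i : ℕ, poch (1/2 : ℝ) i * 4^i = ((2*i).choose i) * (Nat.factorial i) := by
  intro i
  induction i with
  | zero => simp [poch]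
  | succ i ih =>
    rw [poch, Finset.prod_range_succ, ← poch]
    have hc := centralR i
    rw [Nat.factorial_succ, show 2*(i+1) = 2*i+2 from by omega]
    push_cast
    push_cast at ih
    linear_combination (2*(2*(i:ℝ)+1)) * ih - (Nat.factorial i : ℝ) * hc

lemma termF_eq_Ffun (n : ℕ) (x : ℝ) : termF n x = Ffun n (x/4) := by
  rw [termF, Ffun]
  refine Finset.sum_congr rfl (fun i hi => ?_)
  have hi' : i ≤ n := by simp at hi; omega
  have h1 := poch_neg n i hi'
  have h2 := poch_half i
  have hf : (Nat.factorial i : ℝ) ≠ 0 := by positivity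
  have h4 : (4:ℝ)^i ≠ 0 := by positivity
  rw [h1, phiA, div_pow]
  field_simp
  linear_combination (n.choose i : ℝ) * x^i * h2

lemma FB (u : ℝ) (hu : u ≠ 0) : ∀ n : ℕ, (4*u)^n * Ffun n (1/(4*u)) = Bfun n (2*u-1) := by
  have h4u : (4:ℝ)*u ≠ 0 := by simp [hu]
  have hq : (4*u) * (1/(4*u)) = 1 := by field_simp
  intro n
  induction n using Nat.strong_induction_on with
  | _ n ih =>
    match n with
    | 0 => simp [Ffun, Bfun, phiA, psiB]
    | 1 =>
      simp [Ffun, Bfun, phiA, psiB, Finset.sum_range_succ]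
      field_simp
      ring
    | (m+2) =>
      have e1 := Ffun_rec (m+1) (by omega) (1/(4*u))
      have e2 := B_rec (m+1) (by omega) (2*u-1)
      simp only [Nat.add_sub_cancel] at e1 e2
      have ih1 := ih (m+1) (by omega)
      have ih0 := ih m (by omega)
      push_cast at e1 e2
      apply mul_left_cancel₀ (show ((m:ℝ)+2) ≠ 0 by positivity)
      rw [show m+1+1 = m+2 from rfl] at e1 e2
      linear_combination (4*u)^(m+2) * e1 - e2
        + (2*((m:ℝ)+1)+1)*(1-2*(1/(4*u)))*(4*u) * ih1
        + ((m:ℝ)+1)*(4*(1/(4*u))-1)*(16*u^2) * ih0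
        + (-2*(2*((m:ℝ)+1)+1)*Bfun (m+1) (2*u-1) + 16*u*((m:ℝ)+1)*Bfun m (2*u-1)) * hq

theorem termF_eq_legendre (n : ℕ) (k : ℝ) (hk0 : 0 < k) (hk1 : k < 1) :
    (termF n (1 / (1 - k ^ 2)) : ℂ) =
      Complex.I ^ n * (((k ^ 2 / (1 - k ^ 2)) ^ ((n : ℝ) / 2) : ℝ) : ℂ) *
        legendreP n (-Complex.I * ((1 - 2 * k ^ 2 : ℝ) : ℂ) /
          ((2 * k * Real.sqrt (1 - k ^ 2) : ℝ) : ℂ)) := by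
  have hk2 : (0:ℝ) < 1 - k^2 := by nlinarith
  set c := Real.sqrt (1-k^2) with hcdef
  have hc : 0 < c := Real.sqrt_pos.mpr hk2
  have hc2 : c^2 = 1-k^2 := Real.sq_sqrt hk2.le
  have hu : (1-k^2) ≠ 0 := ne_of_gt hk2
  have hcne : c ≠ 0 := ne_of_gt hc
  have hkne : k ≠ 0 := ne_of_gt hk0
  set t : ℝ := 1-2*k^2 with htdef
  set w : ℝ := 2*k*c with hwdef
  have hwne : w ≠ 0 := by positivity
  -- real identity
  have hreal : (4*(1-k^2))^n * termF n (1/(1-k^2)) = Bfun n t := by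
    rw [termF_eq_Ffun, show (1/(1-k^2))/4 = 1/(4*(1-k^2)) from by rw [div_div, mul_comm]]
    have := FB (1-k^2) hu n
    rw [show 2*(1-k^2)-1 = t from by rw [htdef]; ring] at this
    exact this
  have hL : termF n (1/(1-k^2)) = Bfun n t / (4*(1-k^2))^n := by
    rw [← hreal]
    field_simp
  -- rpow
  have hρ : (k^2/(1-k^2)) ^ ((n:ℝ)/2) = (k/c)^n := by
    have hb : k^2/(1-k^2) = (k/c)^2 := by rw [div_pow, hc2]
    rw [hb, ← Real.rpow_natCast (k/c) 2, ← Real.rpow_mul (by positivity),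
        show ((2:ℕ):ℝ)*((n:ℝ)/2) = (n:ℝ) from by push_cast; ring,
        Real.rpow_natCast]
  -- range reduction for Bfun
  have hBr : Bfun n t = ∑ j ∈ Finset.range (n/2+1), psiB n j * t^(n-2*j) * (1-t^2)^j := by
    rw [Bfun]
    refine (Finset.sum_subset (Finset.range_subset_range.mpr (by omega)) ?_).symm
    intro j hj hj2
    have h1 : n/2+1 ≤ j := by simpa [Finset.mem_range] using hj2
    have hjn : j < n+1 := Finset.mem_range.mp hj
    have h2 : (2*n-2*j).choose n = 0 := Nat.choose_eq_zero_of_lt (by omega)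
    simp [psiB, h2]
  have h1t : 1-t^2 = w^2 := by
    rw [hwdef, htdef]
    linear_combination (-4*k^2)*hc2
  rw [hL, hρ, legendreP, hBr, Finset.sum_div]
  rw [Complex.ofReal_sum]
  simp only [Finset.mul_sum]
  refine Finset.sum_congr rfl (fun j hj => ?_)
  have h2j : 2*j ≤ n := by
    have := Finset.mem_range.mp hj
    omega
  obtain ⟨m, hm⟩ : ∃ m, n = m + 2*j := ⟨n-2*j, by omega⟩
  have hzp : (-Complex.I*(t:ℂ)/(w:ℂ))^(n-2*j)
      = (-Complex.I)^(n-2*j) * ((((t/w)^(n-2*j) : ℝ)):ℂ) := by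
    have hzz : -Complex.I*(t:ℂ)/(w:ℂ) = -Complex.I * (((t/w : ℝ)):ℂ) := by
      push_cast
      ring
    rw [hzz, mul_pow]
    norm_cast
  have h2c : ((2:ℂ))^(-(n:ℤ)) = ((((2:ℝ)^n)⁻¹ : ℝ) : ℂ) := by
    rw [zpow_neg, zpow_natCast]
    push_cast
    norm_num
  rw [hzp, h2c, hm, Nat.add_sub_cancel]
  have hIp : Complex.I^(m+2*j) * ((-1:ℂ)^j * (-Complex.I)^m) = 1 := by
    have h2 : ((-Complex.I))^2 = -1 := by
      rw [pow_two]
      simp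
    calc Complex.I^(m+2*j) * ((-1:ℂ)^j*(-Complex.I)^m)
        = Complex.I^(m+2*j)*(((-Complex.I)^2)^j*(-Complex.I)^m) := by rw [h2]
      _ = Complex.I^(m+2*j) * (-Complex.I)^(m+2*j) := by
          rw [← pow_mul, ← pow_add, show 2*j+m = m+2*j from by omega]
      _ = (Complex.I * -Complex.I)^(m+2*j) := (mul_pow _ _ _).symm
      _ = 1 := by
          simp [Complex.I_mul_I]
  have hreal_id : psiB (m+2*j) j * t^m * (1-t^2)^j / (4*(1-k^2))^(m+2*j)
      = (k/c)^(m+2*j) * ((2:ℝ)^(m+2*j))⁻¹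
        * (((m+2*j).choose j : ℝ) * ((2*(m+2*j)-2*j).choose (m+2*j) : ℝ)) * (t/w)^m := by
    obtain ⟨d, hd⟩ : ∃ d:ℝ, d = 2 := ⟨2, rfl⟩
    have hd0 : d ≠ 0 := by rw [hd]; norm_num
    rw [psiB, ← hc2, h1t, hwdef]
    rw [show (4:ℝ) = d*d from by rw [hd]; norm_num,
        show (2:ℝ)^(m+2*j) = d^(m+2*j) from by rw [hd],
        show (2:ℝ)*k*c = d*k*c from by rw [hd]]
    simp only [div_pow, mul_pow, inv_pow]
    field_simp
    ring
  rw [hreal_id]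
  push_cast
  linear_combination (-((k:ℂ)/(c:ℂ))^(m+2*j) * ((2:ℂ)^(m+2*j))⁻¹
    * (((m+2*j).choose j : ℂ)) * (((2*(m+2*j)-2*j).choose (m+2*j) : ℂ))
    * (((t:ℂ)/(w:ℂ))^m)) * hIp
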